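/- Let X = ℓ² and let Ω := {x = (x_k) ∈ ℓ² | Σ_{k=1}^∞ |x_k| ≤ 1} (the ℓ¹-unit ball viewed as a subset of ℓ²). Then the intrinsic relative interior of Ω is iri(Ω) = {x ∈ ℓ² | Σ_{k=1}^∞ |x_k| < 1}. -/

import Mathlib

open Set Pointwise Filter Topology

/-- The cone generated by a set `A`: `{t • a | t ≥ 0, a ∈ A}`. -/
def coneGen {X : Type*} [AddCommGroup X] [Module ℝ X] (A : Set X) : Set X :=
  {y | ∃ t : ℝ, 0 ≤ t ∧ ∃ a ∈ A, y = t • a}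

/-- A set is a linear subspace if it is the carrier of a submodule. -/
def IsLinSubspace {X : Type*} [AddCommGroup X] [Module ℝ X] (s : Set X) : Prop :=
  ∃ L : Submodule ℝ X, (L : Set X) = s

/-- Intrinsic relative interior. -/
def iri {X : Type*} [AddCommGroup X] [Module ℝ X] (Ω : Set X) : Set X :=
  {x ∈ Ω | IsLinSubspace (coneGen ((fun y => y - x) '' Ω))}

/-- Quasi-relative interior. -/
def qri {X : Type*} [AddCommGroup X] [Module ℝ X] [TopologicalSpace X] (Ω : Set X) : Set X :=
  {x ∈ Ω | IsLinSubspace (closure (coneGen ((fun y => y - x) '' Ω)))}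

/-- Relative interior in a topological vector space. -/
def ri {X : Type*} [AddCommGroup X] [Module ℝ X] [TopologicalSpace X] (Ω : Set X) : Set X :=
  {x ∈ Ω | ∃ V ∈ nhds x, V ∩ closure ((affineSpan ℝ Ω : Set X)) ⊆ Ω}

/-- Normal cone (functional-analytic version), a subset of the topological dual. -/
def normalCone {X : Type*} [AddCommGroup X] [Module ℝ X] [TopologicalSpace X]
    (Ω : Set X) (xb : X) : Set (X →L[ℝ] ℝ) :=
  {f | ∀ x ∈ Ω, f (x - xb) ≤ 0}

open scoped ENNReal NNReal

noncomputable def l1n (y : lp (fun _ : ℕ => ℝ) 2) : ℝ≥0∞ := ∑' k, (‖y k‖₊ : ℝ≥0∞)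

lemma l1n_smul (c : ℝ) (y : lp (fun _ : ℕ => ℝ) 2) : l1n (c • y) = ‖c‖₊ * l1n y := by
  unfold l1n
  rw [← ENNReal.tsum_mul_left]
  apply tsum_congr
  intro k
  simp [lp.coeFn_smul, nnnorm_mul]

lemma l1n_add_le (y z : lp (fun _ : ℕ => ℝ) 2) : l1n (y + z) ≤ l1n y + l1n z := by
  unfold l1n
  rw [← ENNReal.tsum_add]
  apply ENNReal.tsum_le_tsum
  intro k
  simp only [lp.coeFn_add, Pi.add_apply]
  exact_mod_cast nnnorm_add_le _ _

lemma l1n_zero : l1n (0 : lp (fun _ : ℕ => ℝ) 2) = 0 := by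
  unfold l1n; simp [lp.coeFn_zero]

lemma l1n_neg (y : lp (fun _ : ℕ => ℝ) 2) : l1n (-y) = l1n y := by
  unfold l1n
  apply tsum_congr
  intro k
  simp [lp.coeFn_neg]

lemma l1n_sub_le (y z : lp (fun _ : ℕ => ℝ) 2) : l1n (y - z) ≤ l1n y + l1n z := by
  rw [sub_eq_add_neg]
  exact (l1n_add_le y (-z)).trans (by rw [l1n_neg])

/-- The set of `ℓ¹` sequences inside `ℓ²`, as a submodule. -/
noncomputable def L1sub : Submodule ℝ (lp (fun _ : ℕ => ℝ) 2) where
  carrier := {y | l1n y ≠ ⊤}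
  zero_mem' := by simp [l1n_zero]
  add_mem' := by
    intro y z hy hz
    simp only [Set.mem_setOf_eq] at *
    exact fun h => (by
      have := (l1n_add_le y z).trans_lt (ENNReal.add_lt_top.2 ⟨hy.lt_top, hz.lt_top⟩)
      exact this.ne h)
  smul_mem' := by
    intro c y hy
    simp only [Set.mem_setOf_eq] at *
    rw [l1n_smul]
    exact ENNReal.mul_ne_top ENNReal.coe_ne_top hy


/-- in `ℓ²`, the intrinsic relative interior of the `ℓ¹`-unit ball
`Ω = {x ∈ ℓ² | ‖x‖₁ ≤ 1}` is `{x ∈ ℓ² | ‖x‖₁ < 1}`. -/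
theorem iri_of_l1_ball_in_l2 :
    iri {x : lp (fun _ : ℕ => ℝ) 2 | ∑' k, (‖x k‖₊ : ℝ≥0∞) ≤ 1} =
      {x : lp (fun _ : ℕ => ℝ) 2 | ∑' k, (‖x k‖₊ : ℝ≥0∞) < 1} := by
  ext x
  constructor
  · rintro ⟨hxΩ, L, hL⟩
    show l1n x < 1
    have hx1 : l1n x ≤ 1 := hxΩ
    rcases lt_or_eq_of_le hx1 with h | h
    · exact h
    exfalso
    -- `-x ∈ coneGen`, hence `x ∈ L`, hence `x ∈ coneGen`
    have hnx : -x ∈ coneGen ((fun y => y - x) ''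
        {x : lp (fun _ : ℕ => ℝ) 2 | ∑' k, (‖x k‖₊ : ℝ≥0∞) ≤ 1}) := by
      refine ⟨1, zero_le_one, 0 - x, ⟨0, ?_, rfl⟩, by simp⟩
      show l1n 0 ≤ 1
      simp [l1n_zero]
    rw [← hL] at hnx
    have hxL : x ∈ (L : Set (lp (fun _ : ℕ => ℝ) 2)) := by simpa using neg_mem hnx
    rw [hL] at hxL
    obtain ⟨t, ht, _, ⟨b, hbΩ, rfl⟩, hx⟩ := hxL
    have h2 : t • b = (1 + t) • x := by
      calc t • b = (t • b - t • x) + t • x := (sub_add_cancel _ _).symm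
        _ = x + t • x := by rw [← smul_sub, ← hx]
        _ = (1 + t) • x := by rw [add_smul, one_smul]
    have h3 : l1n (t • b) = l1n ((1 + t) • x) := by rw [h2]
    rw [l1n_smul, l1n_smul, h] at h3
    have hb1 : l1n b ≤ 1 := hbΩ
    have h4 : (‖(1 : ℝ) + t‖₊ : ℝ≥0∞) ≤ ‖t‖₊ := by
      rw [mul_one] at h3
      calc (‖(1 : ℝ) + t‖₊ : ℝ≥0∞) = ‖t‖₊ * l1n b := h3.symm
        _ ≤ ‖t‖₊ * 1 := mul_le_mul_right hb1 _
        _ = ‖t‖₊ := mul_one _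
    rw [ENNReal.coe_le_coe, ← NNReal.coe_le_coe, coe_nnnorm, coe_nnnorm,
      Real.norm_eq_abs, Real.norm_eq_abs, abs_of_nonneg ht, abs_of_nonneg (by linarith)] at h4
    linarith
  · intro hx
    have hxlt : l1n x < 1 := hx
    have hxΩ : l1n x ≤ 1 := hxlt.le
    refine ⟨hxΩ, L1sub, ?_⟩
    ext y
    simp only [SetLike.mem_coe]
    constructor
    · -- `y ∈ L1sub → y ∈ coneGen`
      intro hy
      have hy' : l1n y ≠ ⊤ := hy
      by_cases hS : l1n y = 0
      · -- then y = 0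
        have hy0 : y = 0 := by
          apply lp.ext
          funext k
          have := ENNReal.tsum_eq_zero.mp hS k
          simpa using this
        exact ⟨0, le_refl 0, x - x, ⟨x, hxΩ, rfl⟩, by simp [hy0]⟩
      · set S := l1n y with hSdef
        set s := l1n x with hsdef
        set t0 : ℝ≥0∞ := (1 - s) / S with ht0def
        have ht0top : t0 ≠ ⊤ := by
          rw [ht0def]
          exact (ENNReal.div_lt_top (by simp) hS).ne
        have ht0pos : t0 ≠ 0 := by
          rw [ht0def]
          apply (ENNReal.div_pos (by simpa [tsub_eq_zero_iff_le] using hxlt.not_ge) hy').ne'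
        set t : ℝ := t0.toReal with htdef
        have htpos : 0 < t := ENNReal.toReal_pos ht0pos ht0top
        have htcoe : (‖t‖₊ : ℝ≥0∞) = t0 := by
          rw [← enorm_eq_nnnorm, Real.enorm_eq_ofReal htpos.le, htdef, ENNReal.ofReal_toReal ht0top]
        have haΩ : l1n (x + t • y) ≤ 1 := by
          calc l1n (x + t • y) ≤ s + l1n (t • y) := l1n_add_le x (t • y)
            _ = s + t0 * S := by rw [l1n_smul, htcoe]
            _ = s + (1 - s) := by rw [ht0def, ENNReal.div_mul_cancel hS hy']
            _ = 1 := add_tsub_cancel_of_le hxΩ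
        refine ⟨t⁻¹, by positivity, (x + t • y) - x, ⟨x + t • y, haΩ, rfl⟩, ?_⟩
        rw [add_sub_cancel_left, smul_smul, inv_mul_cancel₀ htpos.ne', one_smul]
    · rintro ⟨t, ht, _, ⟨a, haΩ, rfl⟩, rfl⟩
      show l1n _ ≠ ⊤
      rw [l1n_smul]
      apply ENNReal.mul_ne_top ENNReal.coe_ne_top
      exact ((l1n_sub_le a x).trans_lt (ENNReal.add_lt_top.2
        ⟨lt_of_le_of_lt haΩ ENNReal.one_lt_top, lt_of_le_of_lt hxΩ ENNReal.one_lt_top⟩)).ne
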